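/- Let R be a Noetherian ring and suppose Λ(R) = Λ'(R), where Λ(R) = {P ∈ Spec R : |R/P|_r = |R|_r} and Λ'(R) = {Q ∈ Spec R : |R/Q|_l = |R|_l}. Then for any two-sided ideal J of R: |R/J|_r < |R|_r if and only if |R/J|_l < |R|_l. -/

import Mathlib

universe u

/-- `DevLE α o`: the Gabriel–Rentschler deviation of the preorder `α` is at most `o`. -/
def DevLE (α : Type u) [Preorder α] (o : Ordinal.{u}) : Prop :=
  ∀ f : ℕ → α, (∀ n, f (n + 1) ≤ f n) →
    ∃ N : ℕ, ∀ n, N ≤ n →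
      f n ≤ f (n + 1) ∨
        ∃ o' : {x : Ordinal.{u} // x < o},
          DevLE {y : α // f (n + 1) ≤ y ∧ y ≤ f n} o'.1
termination_by o
decreasing_by exact o'.2

/-- The deviation (Krull dimension) of a preorder, as the least ordinal bound. -/
noncomputable def dev (α : Type u) [Preorder α] : Ordinal.{u} := sInf {o | DevLE α o}

/-- The left Krull dimension of a ring: deviation of the lattice of left ideals. -/
noncomputable def lKdim (R : Type u) [Ring R] : Ordinal.{u} := dev (Submodule R R)

/-- The right Krull dimension of a ring: deviation of the lattice of right ideals. -/
noncomputable def rKdim (R : Type u) [Ring R] : Ordinal.{u} := dev (Submodule Rᵐᵒᵖ R)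

/-- Krull dimension of a right ideal `J` as a right module: deviation of `[⊥, J]`. -/
noncomputable def rIdealDim (R : Type u) [Ring R] (J : Submodule Rᵐᵒᵖ R) : Ordinal.{u} :=
  dev {I : Submodule Rᵐᵒᵖ R // I ≤ J}

/-- Krull dimension of a left ideal `J` as a left module. -/
noncomputable def lIdealDim (R : Type u) [Ring R] (J : Submodule R R) : Ordinal.{u} :=
  dev {I : Submodule R R // I ≤ J}

/-- A ring is right Krull homogeneous if every nonzero right ideal has full dimension. -/
def RightKH (R : Type u) [Ring R] : Prop :=
  ∀ J : Submodule Rᵐᵒᵖ R, J ≠ ⊥ → rIdealDim R J = rKdim R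

def LeftKH (R : Type u) [Ring R] : Prop :=
  ∀ J : Submodule R R, J ≠ ⊥ → lIdealDim R J = lKdim R

/-- A two-sided ideal is prime if it is proper and `aRb ⊆ P` implies `a ∈ P` or `b ∈ P`. -/
def IsPrimeT {R : Type u} [Ring R] (P : TwoSidedIdeal R) : Prop :=
  (P : Set R) ≠ Set.univ ∧ ∀ a b : R, (∀ r : R, a * r * b ∈ P) → a ∈ P ∨ b ∈ P

/-- Right Krull dimension of the quotient ring `R/I`. -/
noncomputable def rKdimQ {R : Type u} [Ring R] (I : TwoSidedIdeal R) : Ordinal.{u} :=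
  rKdim I.ringCon.Quotient

noncomputable def lKdimQ {R : Type u} [Ring R] (I : TwoSidedIdeal R) : Ordinal.{u} :=
  lKdim I.ringCon.Quotient

/-- `Λ(R)`: primes with full right Krull dimension. -/
def Lam (R : Type u) [Ring R] : Set (TwoSidedIdeal R) :=
  {P | IsPrimeT P ∧ rKdimQ P = rKdim R}

/-- `Λ'(R)`: primes with full left Krull dimension. -/
def Lam' (R : Type u) [Ring R] : Set (TwoSidedIdeal R) :=
  {P | IsPrimeT P ∧ lKdimQ P = lKdim R}

/-- A two-sided ideal viewed as a right ideal. -/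
def rightIdealOf {R : Type u} [Ring R] (I : TwoSidedIdeal R) : Submodule Rᵐᵒᵖ R where
  carrier := I
  zero_mem' := I.zero_mem
  add_mem' := I.add_mem
  smul_mem' := fun r x hx => I.mul_mem_right x r.unop hx

/-- A two-sided ideal viewed as a left ideal. -/
def leftIdealOf {R : Type u} [Ring R] (I : TwoSidedIdeal R) : Submodule R R where
  carrier := I
  zero_mem' := I.zero_mem
  add_mem' := I.add_mem
  smul_mem' := fun r x hx => I.mul_mem_left r x hx

/-- The right annihilator of a set, as a right ideal. -/
def rAnnIdeal (R : Type u) [Ring R] (S : Set R) : Submodule Rᵐᵒᵖ R where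
  carrier := {x | ∀ y ∈ S, y * x = 0}
  zero_mem' := by intro y _; simp
  add_mem' := by intro a b ha hb y hy; rw [mul_add, ha y hy, hb y hy, add_zero]
  smul_mem' := by
    intro r x hx y hy
    show y * (x * r.unop) = 0
    rw [← mul_assoc, hx y hy, zero_mul]

/-- The left annihilator of a set. -/
def lAnnSet (R : Type u) [Ring R] (S : Set R) : Set R := {x | ∀ y ∈ S, x * y = 0}


theorem DevLE.mono {α : Type u} [Preorder α] {o o' : Ordinal.{u}} (h : DevLE α o)
    (hoo : o ≤ o') : DevLE α o' := by
  rw [DevLE] at h ⊢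
  intro f hf
  obtain ⟨N, hN⟩ := h f hf
  refine ⟨N, fun n hn => ?_⟩
  rcases hN n hn with h1 | ⟨⟨x, hx⟩, hd⟩
  · exact Or.inl h1
  · exact Or.inr ⟨⟨x, lt_of_lt_of_le hx hoo⟩, hd⟩

/-- Transfer of deviation bounds along monotone maps that reflect strictness. -/
theorem DevLE.of_map : ∀ (o : Ordinal.{u}) {α β : Type u} [Preorder α] [Preorder β]
    (e : α → β), (∀ x y : α, x ≤ y → e x ≤ e y) →
    (∀ x y : α, x ≤ y → e y ≤ e x → y ≤ x) →
    DevLE β o → DevLE α o := by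
  intro o
  induction o using Ordinal.induction with
  | h o IH =>
    intro α β _ _ e hmono hstrict h
    rw [DevLE] at h ⊢
    intro f hf
    obtain ⟨N, hN⟩ := h (fun n => e (f n)) (fun n => hmono _ _ (hf n))
    refine ⟨N, fun n hn => ?_⟩
    rcases hN n hn with h1 | ⟨⟨x, hx⟩, hd⟩
    · exact Or.inl (hstrict _ _ (hf n) h1)
    · exact Or.inr ⟨⟨x, hx⟩, IH x hx
        (fun y => (⟨e y.1, hmono _ _ y.2.1, hmono _ _ y.2.2⟩ :
          {z : β // e (f (n+1)) ≤ z ∧ z ≤ e (f n)}))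
        (fun a b hab => hmono _ _ hab) (fun a b hab hba => hstrict _ _ hab hba) hd⟩

theorem DevLE.prod : ∀ (o : Ordinal.{u}) {α β : Type u} [Preorder α] [Preorder β],
    DevLE α o → DevLE β o → DevLE (α × β) o := by
  intro o
  induction o using Ordinal.induction with
  | h o IH =>
    intro α β _ _ ha hb
    rw [DevLE] at ha hb ⊢
    intro f hf
    obtain ⟨N₁, hN₁⟩ := ha (fun n => (f n).1) (fun n => (Prod.le_def.1 (hf n)).1)
    obtain ⟨N₂, hN₂⟩ := hb (fun n => (f n).2) (fun n => (Prod.le_def.1 (hf n)).2)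
    refine ⟨max N₁ N₂, fun n hn => ?_⟩
    rcases hN₁ n (le_trans (le_max_left _ _) hn) with h1 | ⟨⟨x₁, hx₁⟩, hd₁⟩
    · rcases hN₂ n (le_trans (le_max_right _ _) hn) with h2 | ⟨⟨x₂, hx₂⟩, hd₂⟩
      · exact Or.inl (Prod.le_def.2 ⟨h1, h2⟩)
      · refine Or.inr ⟨⟨x₂, hx₂⟩, DevLE.of_map x₂
          (fun y => (⟨y.1.2, (Prod.le_def.1 y.2.1).2, (Prod.le_def.1 y.2.2).2⟩ :
            {z : β // (f (n+1)).2 ≤ z ∧ z ≤ (f n).2}))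
          (fun a b hab => Subtype.mk_le_mk.2 (Prod.le_def.1 (Subtype.coe_le_coe.2 hab)).2)
          (fun a b hab hba => Subtype.coe_le_coe.1 (Prod.le_def.2
            ⟨le_trans (Prod.le_def.1 b.2.2).1 (le_trans h1 (Prod.le_def.1 a.2.1).1),
             Subtype.mk_le_mk.1 hba⟩)) hd₂⟩
    · rcases hN₂ n (le_trans (le_max_right _ _) hn) with h2 | ⟨⟨x₂, hx₂⟩, hd₂⟩
      · refine Or.inr ⟨⟨x₁, hx₁⟩, DevLE.of_map x₁
          (fun y => (⟨y.1.1, (Prod.le_def.1 y.2.1).1, (Prod.le_def.1 y.2.2).1⟩ :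
            {z : α // (f (n+1)).1 ≤ z ∧ z ≤ (f n).1}))
          (fun a b hab => Subtype.mk_le_mk.2 (Prod.le_def.1 (Subtype.coe_le_coe.2 hab)).1)
          (fun a b hab hba => Subtype.coe_le_coe.1 (Prod.le_def.2
            ⟨Subtype.mk_le_mk.1 hba,
             le_trans (Prod.le_def.1 b.2.2).2 (le_trans h2 (Prod.le_def.1 a.2.1).2)⟩)) hd₁⟩
      · refine Or.inr ⟨⟨max x₁ x₂, max_lt hx₁ hx₂⟩, ?_⟩
        refine DevLE.of_map _ (fun y =>
            ((⟨y.1.1, (Prod.le_def.1 y.2.1).1, (Prod.le_def.1 y.2.2).1⟩,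
              ⟨y.1.2, (Prod.le_def.1 y.2.1).2, (Prod.le_def.1 y.2.2).2⟩) :
              {z : α // (f (n+1)).1 ≤ z ∧ z ≤ (f n).1} ×
              {z : β // (f (n+1)).2 ≤ z ∧ z ≤ (f n).2}))
          (fun a b hab => Prod.le_def.2
            ⟨Subtype.mk_le_mk.2 (Prod.le_def.1 (Subtype.coe_le_coe.2 hab)).1,
             Subtype.mk_le_mk.2 (Prod.le_def.1 (Subtype.coe_le_coe.2 hab)).2⟩)
          (fun a b hab hba => Subtype.coe_le_coe.1 (Prod.le_def.2
            ⟨Subtype.mk_le_mk.1 (Prod.le_def.1 hba).1,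
             Subtype.mk_le_mk.1 (Prod.le_def.1 hba).2⟩))
          (IH _ (max_lt hx₁ hx₂) (hd₁.mono (le_max_left x₁ x₂)) (hd₂.mono (le_max_right x₁ x₂)))

theorem DevLE.of_forall_le {α : Type u} [Preorder α] (h : ∀ x y : α, x ≤ y)
    (o : Ordinal.{u}) : DevLE α o := by
  rw [DevLE]; exact fun f hf => ⟨0, fun n _ => Or.inl (h _ _)⟩

theorem dev_le {α : Type u} [Preorder α] {o : Ordinal.{u}} (h : DevLE α o) : dev α ≤ o :=
  csInf_le' h

theorem devle_dev {α : Type u} [Preorder α] (h : ∃ o, DevLE α o) : DevLE α (dev α) :=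
  csInf_mem h

theorem dev_congr {α β : Type u} [Preorder α] [Preorder β] (e : α → β) (e' : β → α)
    (hm : ∀ x y : α, x ≤ y → e x ≤ e y) (hs : ∀ x y : α, x ≤ y → e y ≤ e x → y ≤ x)
    (hm' : ∀ x y : β, x ≤ y → e' x ≤ e' y) (hs' : ∀ x y : β, x ≤ y → e' y ≤ e' x → y ≤ x) :
    dev α = dev β := by
  unfold dev
  congr 1
  ext o
  exact ⟨fun h => DevLE.of_map o e' hm' hs' h, fun h => DevLE.of_map o e hm hs h⟩

theorem DevLE.of_wellFoundedLT {α : Type u} [PartialOrder α] (h : WellFoundedLT α) :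
    DevLE α 0 := by
  rw [DevLE]
  intro f hf
  obtain ⟨m, ⟨N, rfl⟩, hmin⟩ := h.wf.has_min (Set.range f) ⟨f 0, 0, rfl⟩
  have anti : Antitone f := antitone_nat_of_succ_le hf
  have key : ∀ k, N ≤ k → f k = f N := fun k hk =>
    ((anti hk).lt_or_eq.resolve_left (hmin (f k) ⟨k, rfl⟩))
  exact ⟨N, fun n hn => Or.inl (le_of_eq
    ((key n hn).trans (key (n+1) (hn.trans (Nat.le_succ n))).symm))⟩

theorem wellFoundedLT_of_devle {α : Type u} [PartialOrder α] (h : DevLE α 0) :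
    WellFoundedLT α := by
  rw [DevLE] at h
  constructor
  rw [RelEmbedding.wellFounded_iff_isEmpty]
  constructor
  intro g
  have hg : ∀ n : ℕ, g (n+1) < g n := fun n => g.map_rel_iff.2 (Nat.lt_succ_self n)
  obtain ⟨N, hN⟩ := h (fun n => g n) (fun n => (hg n).le)
  rcases hN N le_rfl with h1 | ⟨⟨x, hx⟩, _⟩
  · exact absurd h1 (hg N).not_ge
  · exact absurd hx (not_lt_of_ge zero_le)

theorem wellFoundedGT_of_map {α β : Type u} [Preorder α] [Preorder β] (e : α → β)
    (hm : ∀ x y : α, x ≤ y → e x ≤ e y) (hs : ∀ x y : α, x ≤ y → e y ≤ e x → y ≤ x)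
    (h : WellFoundedGT β) : WellFoundedGT α := by
  constructor
  refine Subrelation.wf (r := InvImage (· > ·) e) ?_ (InvImage.wf e h.wf)
  intro a b hab
  exact lt_of_le_not_ge (hm _ _ hab.le) (fun hba => hab.not_ge (hs _ _ hab.le hba))

theorem wellFoundedGT_subtype {α : Type u} [Preorder α] [WellFoundedGT α] (p : α → Prop) :
    WellFoundedGT {x : α // p x} :=
  wellFoundedGT_of_map (fun x => x.1) (fun _ _ h => h) (fun _ _ _ h => h) inferInstance

theorem exists_devle {α : Type u} [PartialOrder α] [WellFoundedGT α] :
    ∃ o : Ordinal.{u}, DevLE α o := by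
  have key : ∀ a : α, ∃ o : Ordinal.{u}, DevLE {y : α // a ≤ y} o := by
    intro a
    refine WellFounded.induction (C := fun a => ∃ o : Ordinal.{u}, DevLE {y : α // a ≤ y} o)
      (IsWellFounded.wf : WellFounded ((· > ·) : α → α → Prop)) a ?_
    intro b IH
    classical
    have hgd : ∀ y : {y : α // b < y}, DevLE {z : α // y.1 ≤ z} (dev {z : α // y.1 ≤ z}) :=
      fun y => devle_dev (IH y.1 y.2)
    refine ⟨(⨆ y : {y : α // b < y}, dev {z : α // y.1 ≤ z}) + 1, ?_⟩
    rw [DevLE]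
    intro f hf
    by_cases hb : ∃ m, (f m).1 = b
    · obtain ⟨m, hm⟩ := hb
      have anti : Antitone f := antitone_nat_of_succ_le hf
      have key : ∀ k, m ≤ k → (f k).1 = b := fun k hk =>
        le_antisymm (le_trans (anti hk : (f k).1 ≤ (f m).1) hm.le) (f k).2
      refine ⟨m, fun n hn => Or.inl ?_⟩
      show (f n).1 ≤ (f (n+1)).1
      rw [key n hn, key (n+1) (hn.trans (Nat.le_succ n))]
    · push_neg at hb
      refine ⟨0, fun n _ => Or.inr ?_⟩
      have hgt : b < (f (n+1)).1 := lt_of_le_of_ne (f (n+1)).2 (Ne.symm (hb (n+1)))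
      have hlt : dev {z : α // (f (n+1)).1 ≤ z} <
          (⨆ y : {y : α // b < y}, dev {z : α // y.1 ≤ z}) + 1 := by
        refine lt_of_le_of_lt (le_ciSup (f := fun y : {y : α // b < y} => dev {z : α // y.1 ≤ z})
          (Ordinal.bddAbove_range _) (⟨(f (n+1)).1, hgt⟩ : {y : α // b < y})) ?_
        rw [Ordinal.add_one_eq_succ]
        exact Order.lt_succ _
      exact ⟨⟨_, hlt⟩, DevLE.of_map _
        (fun y => (⟨y.1.1, y.2.1⟩ : {z : α // (f (n+1)).1 ≤ z}))
        (fun x y hxy => hxy) (fun x y hxy hyx => hyx) (hgd ⟨(f (n+1)).1, hgt⟩)⟩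
  refine ⟨(⨆ a : α, dev {y : α // a ≤ y}) + 1, ?_⟩
  rw [DevLE]
  intro f hf
  refine ⟨0, fun n _ => Or.inr ?_⟩
  have hlt : dev {y : α // f (n+1) ≤ y} < (⨆ a : α, dev {y : α // a ≤ y}) + 1 := by
    refine lt_of_le_of_lt (le_ciSup (f := fun a : α => dev {y : α // a ≤ y})
      (Ordinal.bddAbove_range _) (f (n+1))) ?_
    rw [Ordinal.add_one_eq_succ]
    exact Order.lt_succ _
  exact ⟨⟨_, hlt⟩, DevLE.of_map _ (fun y => (⟨y.1, y.2.1⟩ : {z : α // f (n+1) ≤ z}))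
    (fun x y hxy => hxy) (fun x y hxy hyx => hyx) (devle_dev (key (f (n+1))))⟩

noncomputable def devI {β : Type u} [Preorder β] (a b : β) : Ordinal.{u} :=
  dev {x : β // a ≤ x ∧ x ≤ b}

theorem exists_devle_int {β : Type u} [PartialOrder β] [WellFoundedGT β] (a b : β) :
    ∃ o, DevLE {x : β // a ≤ x ∧ x ≤ b} o := by
  haveI := wellFoundedGT_subtype (fun x : β => a ≤ x ∧ x ≤ b)
  exact exists_devle

theorem devI_mono {β : Type u} [PartialOrder β] [WellFoundedGT β] {a b a' b' : β}
    (ha : a' ≤ a) (hb : b ≤ b') : devI a b ≤ devI a' b' :=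
  dev_le (DevLE.of_map _ (fun x => (⟨x.1, le_trans ha x.2.1, le_trans x.2.2 hb⟩ :
    {x : β // a' ≤ x ∧ x ≤ b'})) (fun _ _ h => h) (fun _ _ _ h => h)
    (devle_dev (exists_devle_int a' b')))

theorem devI_self_zero {β : Type u} [PartialOrder β] (a : β) : devI a a = 0 :=
  le_antisymm (dev_le (DevLE.of_forall_le (fun x y => (x.2.2.trans y.2.1 : x.1 ≤ y.1)) 0))
    zero_le

theorem dev_eq_devI_bot_top (β : Type u) [Preorder β] [OrderBot β] [OrderTop β] :
    dev β = devI (⊥ : β) ⊤ :=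
  dev_congr (fun x => (⟨x, bot_le, le_top⟩ : {x : β // ⊥ ≤ x ∧ x ≤ ⊤})) (fun x => x.1)
    (fun _ _ h => h) (fun _ _ _ h => h) (fun _ _ h => h) (fun _ _ _ h => h)

theorem devle_split {β : Type u} [Lattice β] [IsModularLattice β] {a c b : β}
    (hac : a ≤ c) (hcb : c ≤ b) {o : Ordinal.{u}}
    (h1 : DevLE {x : β // a ≤ x ∧ x ≤ c} o) (h2 : DevLE {x : β // c ≤ x ∧ x ≤ b} o) :
    DevLE {x : β // a ≤ x ∧ x ≤ b} o := by
  refine DevLE.of_map o (fun x => ((⟨x.1 ⊔ c, le_sup_right, sup_le x.2.2 hcb⟩,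
      ⟨x.1 ⊓ c, le_inf x.2.1 hac, inf_le_right⟩) :
      {y : β // c ≤ y ∧ y ≤ b} × {y : β // a ≤ y ∧ y ≤ c}))
    (fun x y h => Prod.le_def.2 ⟨Subtype.mk_le_mk.2 (sup_le_sup_right h c),
      Subtype.mk_le_mk.2 (inf_le_inf_right c h)⟩)
    (fun x y hxy h => ?_) (DevLE.prod o h2 h1)
  have h1' : y.1 ⊔ c ≤ x.1 ⊔ c := Subtype.mk_le_mk.1 (Prod.le_def.1 h).1
  have h2' : y.1 ⊓ c ≤ x.1 ⊓ c := Subtype.mk_le_mk.1 (Prod.le_def.1 h).2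
  have hcy : c ⊓ y.1 ≤ x.1 := by
    rw [inf_comm]
    exact h2'.trans inf_le_left
  refine Subtype.coe_le_coe.1 ?_
  calc (y.1 : β) = (x.1 ⊔ c) ⊓ y.1 := (inf_eq_right.2 (le_sup_left.trans h1')).symm
  _ = x.1 ⊔ c ⊓ y.1 := sup_inf_assoc_of_le c (Subtype.coe_le_coe.2 hxy)
  _ ≤ x.1 := sup_le le_rfl hcy

theorem devI_le_max {β : Type u} [Lattice β] [IsModularLattice β] [WellFoundedGT β]
    {a c b : β} (hac : a ≤ c) (hcb : c ≤ b) :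
    devI a b ≤ max (devI a c) (devI c b) :=
  dev_le (devle_split hac hcb ((devle_dev (exists_devle_int a c)).mono (le_max_left _ _))
    ((devle_dev (exists_devle_int c b)).mono (le_max_right _ _)))

theorem devle_simple {β : Type u} [PartialOrder β] [OrderBot β] {v : β}
    (hs : ∀ w : β, w ≤ v → w = ⊥ ∨ w = v) : DevLE {x : β // ⊥ ≤ x ∧ x ≤ v} 0 := by
  rw [DevLE]
  intro f hf
  classical
  by_cases hb : ∃ m, (f m).1 = ⊥
  · obtain ⟨m, hm⟩ := hb
    have anti : Antitone f := antitone_nat_of_succ_le hf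
    have key : ∀ k, m ≤ k → (f k).1 = ⊥ := fun k hk =>
      le_antisymm (le_trans (anti hk : (f k).1 ≤ (f m).1) hm.le) bot_le
    refine ⟨m, fun n hn => Or.inl ?_⟩
    show (f n).1 ≤ (f (n+1)).1
    rw [key n hn, key (n+1) (hn.trans (Nat.le_succ n))]
  · push_neg at hb
    have key : ∀ k, (f k).1 = v := fun k => ((hs _ (f k).2.2).resolve_left (hb k))
    refine ⟨0, fun n _ => Or.inl ?_⟩
    show (f n).1 ≤ (f (n+1)).1
    rw [key n, key (n+1)]


section RingPlumb
variable {R : Type u} [Ring R]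

theorem isNoetherian_right [IsNoetherianRing Rᵐᵒᵖ] : IsNoetherian Rᵐᵒᵖ R := by
  have e : Rᵐᵒᵖ ≃ₗ[Rᵐᵒᵖ] R :=
    { toFun := MulOpposite.unop, invFun := MulOpposite.op,
      map_add' := fun _ _ => rfl, map_smul' := fun _ _ => rfl,
      left_inv := fun _ => rfl, right_inv := fun _ => rfl }
  exact isNoetherian_of_linearEquiv e

theorem wfgt_right [IsNoetherianRing Rᵐᵒᵖ] : WellFoundedGT (Submodule Rᵐᵒᵖ R) := by
  haveI := isNoetherian_right (R := R)
  infer_instance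

theorem coe_surj (A : TwoSidedIdeal R) : ∀ q : A.ringCon.Quotient, ∃ x : R, (x : A.ringCon.Quotient) = q :=
  fun q => Quot.inductionOn q fun r => ⟨r, rfl⟩

theorem coe_zero_iff (A : TwoSidedIdeal R) (x : R) : (x : A.ringCon.Quotient) = 0 ↔ x ∈ A := by
  rw [show (0 : A.ringCon.Quotient) = ((0 : R) : A.ringCon.Quotient) from (A.ringCon.coe_zero).symm,
    A.ringCon.eq, TwoSidedIdeal.rel_iff, sub_zero]

/-- pull back a right ideal of the quotient ring -/
def qcomapR (A : TwoSidedIdeal R) (S : Submodule (A.ringCon.Quotient)ᵐᵒᵖ A.ringCon.Quotient) :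
    Submodule Rᵐᵒᵖ R where
  carrier := {x : R | (x : A.ringCon.Quotient) ∈ S}
  zero_mem' := by
    show ((0:R) : A.ringCon.Quotient) ∈ S
    rw [A.ringCon.coe_zero]; exact S.zero_mem
  add_mem' := by
    intro a b ha hb
    show ((a + b : R) : A.ringCon.Quotient) ∈ S
    rw [A.ringCon.coe_add]; exact S.add_mem ha hb
  smul_mem' := by
    intro r x hx
    show ((x * r.unop : R) : A.ringCon.Quotient) ∈ S
    rw [A.ringCon.coe_mul]
    exact S.smul_mem (MulOpposite.op ((r.unop : R) : A.ringCon.Quotient)) hx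

/-- push forward a right ideal of `R` -/
def qmapR (A : TwoSidedIdeal R) (K : Submodule Rᵐᵒᵖ R) :
    Submodule (A.ringCon.Quotient)ᵐᵒᵖ A.ringCon.Quotient where
  carrier := (fun x : R => (x : A.ringCon.Quotient)) '' K
  zero_mem' := ⟨0, K.zero_mem, A.ringCon.coe_zero⟩
  add_mem' := by
    rintro _ _ ⟨a, ha, rfl⟩ ⟨b, hb, rfl⟩
    exact ⟨a + b, K.add_mem ha hb, A.ringCon.coe_add a b⟩
  smul_mem' := by
    rintro q _ ⟨a, ha, rfl⟩
    obtain ⟨r, hr⟩ := coe_surj A q.unop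
    refine ⟨a * r, K.smul_mem (MulOpposite.op r) ha, ?_⟩
    show ((a * r : R) : A.ringCon.Quotient) = (a : A.ringCon.Quotient) * q.unop
    rw [A.ringCon.coe_mul, hr]

theorem rIdeal_le_qcomapR (A : TwoSidedIdeal R)
    (S : Submodule (A.ringCon.Quotient)ᵐᵒᵖ A.ringCon.Quotient) :
    rightIdealOf A ≤ qcomapR A S := by
  intro a ha
  show ((a : R) : A.ringCon.Quotient) ∈ S
  rw [(coe_zero_iff A a).2 ha]
  exact S.zero_mem

theorem dev_quot_right (A : TwoSidedIdeal R) :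
    dev (Submodule (A.ringCon.Quotient)ᵐᵒᵖ A.ringCon.Quotient) =
      devI (rightIdealOf A) (⊤ : Submodule Rᵐᵒᵖ R) := by
  refine dev_congr
    (fun S => (⟨qcomapR A S, rIdeal_le_qcomapR A S, le_top⟩ :
      {x : Submodule Rᵐᵒᵖ R // rightIdealOf A ≤ x ∧ x ≤ ⊤}))
    (fun K => qmapR A K.1) ?_ ?_ ?_ ?_
  · exact fun S S' h x hx => h hx
  · intro S S' h1 h2
    intro q hq
    obtain ⟨x, rfl⟩ := coe_surj A q
    exact h2 (hq : (x : A.ringCon.Quotient) ∈ S')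
  · rintro K K' h _ ⟨a, ha, rfl⟩
    exact ⟨a, h ha, rfl⟩
  · intro K K' h1 h2 z hz
    obtain ⟨k, hk, hzk⟩ := h2 ⟨z, hz, rfl⟩
    have : A.ringCon z k := A.ringCon.eq.1 hzk.symm
    have hsub : z - k ∈ A := (TwoSidedIdeal.rel_iff _ _ _).1 this
    have : z - k + k ∈ K.1 := K.1.add_mem (K.2.1 hsub) hk
    rwa [sub_add_cancel] at this

end RingPlumb


section RingRight
variable {R : Type u} [Ring R]

theorem rKdimQ_eq_devI (A : TwoSidedIdeal R) :
    rKdimQ A = devI (rightIdealOf A) (⊤ : Submodule Rᵐᵒᵖ R) :=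
  dev_quot_right A

theorem rKdim_eq_devI : rKdim R = devI (⊥ : Submodule Rᵐᵒᵖ R) ⊤ :=
  dev_eq_devI_bot_top _

theorem rightIdealOf_mono {A B : TwoSidedIdeal R} (h : A ≤ B) :
    rightIdealOf A ≤ rightIdealOf B := fun x hx =>
  (show x ∈ (B : Set R) from TwoSidedIdeal.le_iff.1 h (hx : x ∈ (A : Set R)))

theorem rKdimQ_mono [IsNoetherianRing Rᵐᵒᵖ] {A B : TwoSidedIdeal R} (h : A ≤ B) :
    rKdimQ B ≤ rKdimQ A := by
  haveI := wfgt_right (R := R)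
  rw [rKdimQ_eq_devI, rKdimQ_eq_devI]
  exact devI_mono (rightIdealOf_mono h) le_rfl

theorem rKdimQ_le [IsNoetherianRing Rᵐᵒᵖ] (A : TwoSidedIdeal R) : rKdimQ A ≤ rKdim R := by
  haveI := wfgt_right (R := R)
  rw [rKdimQ_eq_devI, rKdim_eq_devI]
  exact devI_mono bot_le le_rfl

/-- `{r | a * r ∈ K}` as a right ideal. -/
def divIdealR (K : Submodule Rᵐᵒᵖ R) (a : R) : Submodule Rᵐᵒᵖ R where
  carrier := {r : R | a * r ∈ K}
  zero_mem' := by show a * 0 ∈ K; rw [mul_zero]; exact K.zero_mem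
  add_mem' := by
    intro x y hx hy
    show a * (x + y) ∈ K
    rw [mul_add]; exact K.add_mem hx hy
  smul_mem' := by
    intro s x hx
    show a * (x * s.unop) ∈ K
    rw [← mul_assoc]
    exact K.smul_mem s hx

theorem cyclic_right [IsNoetherianRing Rᵐᵒᵖ] (Bt : TwoSidedIdeal R)
    (c : Submodule Rᵐᵒᵖ R) (a : R) (hc : ∀ w ∈ Bt, a * w ∈ c) :
    devI c (c ⊔ Submodule.span Rᵐᵒᵖ {a}) ≤ devI (rightIdealOf Bt) (⊤ : Submodule Rᵐᵒᵖ R) := by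
  haveI := wfgt_right (R := R)
  refine dev_le (DevLE.of_map _ (fun K =>
    (⟨divIdealR K.1 a, fun w hw => K.2.1 (hc w hw), le_top⟩ :
      {x : Submodule Rᵐᵒᵖ R // rightIdealOf Bt ≤ x ∧ x ≤ ⊤}))
    (fun x y h r hr => h hr) ?_ (devle_dev (exists_devle_int _ _)))
  intro x y hxy h z hz
  have hz' := y.2.2 hz
  obtain ⟨u, hu, v, hv, huv⟩ := Submodule.mem_sup.1 hz'
  obtain ⟨s, hs⟩ := Submodule.mem_span_singleton.1 hv
  have hva : v = a * s.unop := hs.symm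
  have hvy : v ∈ y.1 := by
    have : z - u ∈ y.1 := y.1.sub_mem hz (y.2.1 hu)
    rwa [← huv, add_sub_cancel_left] at this
  have hsx : s.unop ∈ divIdealR x.1 a := h (show a * s.unop ∈ y.1 from hva ▸ hvy)
  have hvx : v ∈ x.1 := hva ▸ hsx
  have : u + v ∈ x.1 := x.1.add_mem (x.2.1 hu) hvx
  rwa [huv] at this

theorem gen_bound_right [IsNoetherianRing Rᵐᵒᵖ] (Bt : TwoSidedIdeal R)
    (p : Submodule Rᵐᵒᵖ R) :
    ∀ l : List R, (∀ x ∈ l, ∀ w ∈ Bt, x * w ∈ p) →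
    devI p (p ⊔ Submodule.span Rᵐᵒᵖ {x : R | x ∈ l}) ≤
      devI (rightIdealOf Bt) (⊤ : Submodule Rᵐᵒᵖ R) := by
  haveI := wfgt_right (R := R)
  intro l
  induction l with
  | nil =>
    intro _
    have hset : {x : R | x ∈ ([] : List R)} = (∅ : Set R) := by ext z; simp
    rw [hset, Submodule.span_empty, sup_bot_eq, devI_self_zero]
    exact zero_le
  | cons a t IH =>
    intro hl
    have hset : {x : R | x ∈ a :: t} = insert a {x : R | x ∈ t} := by ext z; simp
    have hsup : p ⊔ Submodule.span Rᵐᵒᵖ {x : R | x ∈ a :: t} =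
        (p ⊔ Submodule.span Rᵐᵒᵖ {x : R | x ∈ t}) ⊔ Submodule.span Rᵐᵒᵖ {a} := by
      rw [hset, Submodule.span_insert, sup_comm (Submodule.span Rᵐᵒᵖ {a}) _, ← sup_assoc]
    rw [hsup]
    refine le_trans (devI_le_max le_sup_left le_sup_left) (max_le (IH ?_) ?_)
    · exact fun x hx w hw => hl x (List.mem_cons_of_mem a hx) w hw
    · exact cyclic_right Bt _ a (fun w hw =>
        (le_sup_left : p ≤ p ⊔ Submodule.span Rᵐᵒᵖ {x : R | x ∈ t})
          (hl a List.mem_cons_self w hw))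

theorem exist_prime_right [IsNoetherianRing Rᵐᵒᵖ] (J : TwoSidedIdeal R)
    (hne : rKdim R ≠ 0) (hJ : rKdimQ J = rKdim R) :
    ∃ P : TwoSidedIdeal R, IsPrimeT P ∧ J ≤ P ∧ rKdimQ P = rKdim R := by
  haveI hwf := wfgt_right (R := R)
  haveI := isNoetherian_right (R := R)
  have wfT : WellFoundedGT (TwoSidedIdeal R) :=
    wellFoundedGT_of_map (fun I => rightIdealOf I)
      (fun _ _ h => rightIdealOf_mono h)
      (fun x y _ h => TwoSidedIdeal.le_iff.2 (fun z hz => h (hz : z ∈ (y : Set R))))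
      inferInstance
  obtain ⟨P, ⟨hJP, hPd⟩, hmax⟩ := wfT.wf.has_min
    {I : TwoSidedIdeal R | J ≤ I ∧ rKdimQ I = rKdim R} ⟨J, le_rfl, hJ⟩
  refine ⟨P, ⟨?_, ?_⟩, hJP, hPd⟩
  · intro huniv
    have htop : rightIdealOf P = ⊤ := by
      ext z
      exact ⟨fun _ => trivial, fun _ => (show z ∈ (P : Set R) from huniv ▸ Set.mem_univ z)⟩
    have h0 : rKdimQ P = 0 := by
      rw [rKdimQ_eq_devI, htop]
      have := devI_self_zero (⊤ : Submodule Rᵐᵒᵖ R)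
      exact this
    exact hne (hPd ▸ h0)
  · intro x y hxy
    by_contra hcon
    push_neg at hcon
    obtain ⟨hx, hy⟩ := hcon
    -- the ideal B = {z | xRz ⊆ P}
    set B : TwoSidedIdeal R := TwoSidedIdeal.mk' {z : R | ∀ r : R, x * r * z ∈ P}
      (fun r => by rw [mul_zero]; exact P.zero_mem)
      (fun {z w} hz hw r => by rw [mul_add]; exact P.add_mem (hz r) (hw r))
      (fun {z} hz r => by rw [mul_neg]; exact P.neg_mem (hz r))
      (fun {w z} hz r => by rw [show x * r * (w * z) = x * (r * w) * z by noncomm_ring]; exact hz (r * w))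
      (fun {z w} hz r => by rw [← mul_assoc]; exact P.mul_mem_right _ _ (hz r)) with hBdef
    have memB : ∀ z : R, z ∈ B ↔ ∀ r : R, x * r * z ∈ P := fun z =>
      TwoSidedIdeal.mem_mk' _ _ _ _ _ _ z
    have hPB : P ≤ B := TwoSidedIdeal.le_iff.2 (fun p hp => (memB p).2
      (fun r => P.mul_mem_left _ _ hp))
    have hyB : y ∈ B := (memB y).2 hxy
    have hPltB : P < B := lt_of_le_of_ne hPB (fun hEq => hy (hEq ▸ hyB))
    have hBd : rKdimQ B < rKdim R := by
      refine lt_of_le_of_ne (rKdimQ_le B) (fun hEq => ?_)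
      exact hmax B ⟨hJP.trans hPB, hEq⟩ hPltB
    -- the ideal A = {z | z * B ⊆ P}
    set A : TwoSidedIdeal R := TwoSidedIdeal.mk' {z : R | ∀ w ∈ B, z * w ∈ P}
      (fun w _ => by rw [zero_mul]; exact P.zero_mem)
      (fun {z z'} hz hz' w hw => by rw [add_mul]; exact P.add_mem (hz w hw) (hz' w hw))
      (fun {z} hz w hw => by rw [neg_mul]; exact P.neg_mem (hz w hw))
      (fun {z z'} hz' w hw => by rw [mul_assoc]; exact P.mul_mem_left _ _ (hz' w hw))
      (fun {z z'} hz w hw => by rw [mul_assoc]; exact hz _ (B.mul_mem_left _ _ hw)) with hAdef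
    have memA : ∀ z : R, z ∈ A ↔ ∀ w ∈ B, z * w ∈ P := fun z =>
      TwoSidedIdeal.mem_mk' _ _ _ _ _ _ z
    have hPA : P ≤ A := TwoSidedIdeal.le_iff.2 (fun p hp => (memA p).2
      (fun w _ => P.mul_mem_right _ _ hp))
    have hxA : x ∈ A := (memA x).2 (fun w hw => by
      have := (memB w).1 hw 1
      rwa [mul_one] at this)
    have hPltA : P < A := lt_of_le_of_ne hPA (fun hEq => hx (hEq ▸ hxA))
    have hAd : rKdimQ A < rKdim R := by
      refine lt_of_le_of_ne (rKdimQ_le A) (fun hEq => ?_)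
      exact hmax A ⟨hJP.trans hPA, hEq⟩ hPltA
    -- now the dimension computation
    obtain ⟨s, hs⟩ := (IsNoetherian.noetherian (rightIdealOf A) : (rightIdealOf A).FG)
    have hlist : {z : R | z ∈ s.toList} = (↑s : Set R) := by ext z; simp
    have hAr : rightIdealOf P ⊔ Submodule.span Rᵐᵒᵖ {z : R | z ∈ s.toList} = rightIdealOf A := by
      rw [hlist, hs]
      exact sup_eq_right.2 (rightIdealOf_mono hPA)
    have hPA' : devI (rightIdealOf P) (rightIdealOf A) ≤
        devI (rightIdealOf B) (⊤ : Submodule Rᵐᵒᵖ R) := by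
      rw [← hAr]
      refine gen_bound_right B (rightIdealOf P) s.toList ?_
      intro z hz w hw
      have hzs : z ∈ (↑s : Set R) := by simpa using hz
      have hzA : z ∈ A := (show z ∈ rightIdealOf A from hs ▸ Submodule.subset_span hzs)
      exact (memA z).1 hzA w hw
    have hsplit : rKdim R ≤ max (devI (rightIdealOf P) (rightIdealOf A))
        (devI (rightIdealOf A) (⊤ : Submodule Rᵐᵒᵖ R)) := by
      rw [← hPd, rKdimQ_eq_devI]
      exact devI_le_max (rightIdealOf_mono hPA) le_top
    have h1 : devI (rightIdealOf P) (rightIdealOf A) < rKdim R :=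
      lt_of_le_of_lt (hPA'.trans_eq (rKdimQ_eq_devI B).symm) hBd
    have h2 : devI (rightIdealOf A) (⊤ : Submodule Rᵐᵒᵖ R) < rKdim R :=
      (rKdimQ_eq_devI A ▸ hAd)
    exact absurd hsplit (not_le.2 (max_lt h1 h2))

end RingRight


section RingLeft
variable {R : Type u} [Ring R]

/-- pull back a left ideal of the quotient ring -/
def qcomapL (A : TwoSidedIdeal R) (S : Submodule A.ringCon.Quotient A.ringCon.Quotient) :
    Submodule R R where
  carrier := {x : R | (x : A.ringCon.Quotient) ∈ S}
  zero_mem' := by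
    show ((0:R) : A.ringCon.Quotient) ∈ S
    rw [A.ringCon.coe_zero]; exact S.zero_mem
  add_mem' := by
    intro a b ha hb
    show ((a + b : R) : A.ringCon.Quotient) ∈ S
    rw [A.ringCon.coe_add]; exact S.add_mem ha hb
  smul_mem' := by
    intro r x hx
    show ((r * x : R) : A.ringCon.Quotient) ∈ S
    rw [A.ringCon.coe_mul]
    exact S.smul_mem ((r : R) : A.ringCon.Quotient) hx

/-- push forward a left ideal of `R` -/
def qmapL (A : TwoSidedIdeal R) (K : Submodule R R) :
    Submodule A.ringCon.Quotient A.ringCon.Quotient where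
  carrier := (fun x : R => (x : A.ringCon.Quotient)) '' K
  zero_mem' := ⟨0, K.zero_mem, A.ringCon.coe_zero⟩
  add_mem' := by
    rintro _ _ ⟨a, ha, rfl⟩ ⟨b, hb, rfl⟩
    exact ⟨a + b, K.add_mem ha hb, A.ringCon.coe_add a b⟩
  smul_mem' := by
    rintro q _ ⟨a, ha, rfl⟩
    obtain ⟨r, hr⟩ := coe_surj A q
    refine ⟨r * a, K.smul_mem r ha, ?_⟩
    show ((r * a : R) : A.ringCon.Quotient) = q • (a : A.ringCon.Quotient)
    rw [A.ringCon.coe_mul, hr]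
    rfl

theorem lIdeal_le_qcomapL (A : TwoSidedIdeal R)
    (S : Submodule A.ringCon.Quotient A.ringCon.Quotient) :
    leftIdealOf A ≤ qcomapL A S := by
  intro a ha
  show ((a : R) : A.ringCon.Quotient) ∈ S
  rw [(coe_zero_iff A a).2 ha]
  exact S.zero_mem

theorem dev_quot_left (A : TwoSidedIdeal R) :
    dev (Submodule A.ringCon.Quotient A.ringCon.Quotient) =
      devI (leftIdealOf A) (⊤ : Submodule R R) := by
  refine dev_congr
    (fun S => (⟨qcomapL A S, lIdeal_le_qcomapL A S, le_top⟩ :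
      {x : Submodule R R // leftIdealOf A ≤ x ∧ x ≤ ⊤}))
    (fun K => qmapL A K.1) ?_ ?_ ?_ ?_
  · exact fun S S' h x hx => h hx
  · intro S S' h1 h2
    intro q hq
    obtain ⟨x, rfl⟩ := coe_surj A q
    exact h2 (hq : (x : A.ringCon.Quotient) ∈ S')
  · rintro K K' h _ ⟨a, ha, rfl⟩
    exact ⟨a, h ha, rfl⟩
  · intro K K' h1 h2 z hz
    obtain ⟨k, hk, hzk⟩ := h2 ⟨z, hz, rfl⟩
    have : A.ringCon z k := A.ringCon.eq.1 hzk.symm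
    have hsub : z - k ∈ A := (TwoSidedIdeal.rel_iff _ _ _).1 this
    have : z - k + k ∈ K.1 := K.1.add_mem (K.2.1 hsub) hk
    rwa [sub_add_cancel] at this

theorem lKdimQ_eq_devI (A : TwoSidedIdeal R) :
    lKdimQ A = devI (leftIdealOf A) (⊤ : Submodule R R) :=
  dev_quot_left A

theorem lKdim_eq_devI : lKdim R = devI (⊥ : Submodule R R) ⊤ :=
  dev_eq_devI_bot_top _

theorem leftIdealOf_mono {A B : TwoSidedIdeal R} (h : A ≤ B) :
    leftIdealOf A ≤ leftIdealOf B := fun x hx =>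
  (show x ∈ (B : Set R) from TwoSidedIdeal.le_iff.1 h (hx : x ∈ (A : Set R)))

theorem lKdimQ_mono [IsNoetherianRing R] {A B : TwoSidedIdeal R} (h : A ≤ B) :
    lKdimQ B ≤ lKdimQ A := by
  rw [lKdimQ_eq_devI, lKdimQ_eq_devI]
  exact devI_mono (leftIdealOf_mono h) le_rfl

theorem lKdimQ_le [IsNoetherianRing R] (A : TwoSidedIdeal R) : lKdimQ A ≤ lKdim R := by
  rw [lKdimQ_eq_devI, lKdim_eq_devI]
  exact devI_mono bot_le le_rfl

/-- `{r | r * a ∈ K}` as a left ideal. -/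
def divIdealL (K : Submodule R R) (a : R) : Submodule R R where
  carrier := {r : R | r * a ∈ K}
  zero_mem' := by show (0:R) * a ∈ K; rw [zero_mul]; exact K.zero_mem
  add_mem' := by
    intro x y hx hy
    show (x + y) * a ∈ K
    rw [add_mul]; exact K.add_mem hx hy
  smul_mem' := by
    intro s x hx
    show s * x * a ∈ K
    rw [mul_assoc]
    exact K.smul_mem s hx

theorem cyclic_left [IsNoetherianRing R] (Bt : TwoSidedIdeal R)
    (c : Submodule R R) (a : R) (hc : ∀ w ∈ Bt, w * a ∈ c) :
    devI c (c ⊔ Submodule.span R {a}) ≤ devI (leftIdealOf Bt) (⊤ : Submodule R R) := by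
  refine dev_le (DevLE.of_map _ (fun K =>
    (⟨divIdealL K.1 a, fun w hw => K.2.1 (hc w hw), le_top⟩ :
      {x : Submodule R R // leftIdealOf Bt ≤ x ∧ x ≤ ⊤}))
    (fun x y h r hr => h hr) ?_ (devle_dev (exists_devle_int _ _)))
  intro x y hxy h z hz
  have hz' := y.2.2 hz
  obtain ⟨u, hu, v, hv, huv⟩ := Submodule.mem_sup.1 hz'
  obtain ⟨s, hs⟩ := Submodule.mem_span_singleton.1 hv
  have hva : v = s * a := hs.symm
  have hvy : v ∈ y.1 := by
    have : z - u ∈ y.1 := y.1.sub_mem hz (y.2.1 hu)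
    rwa [← huv, add_sub_cancel_left] at this
  have hsx : s ∈ divIdealL x.1 a := h (show s * a ∈ y.1 from hva ▸ hvy)
  have hvx : v ∈ x.1 := hva ▸ hsx
  have : u + v ∈ x.1 := x.1.add_mem (x.2.1 hu) hvx
  rwa [huv] at this

theorem gen_bound_left [IsNoetherianRing R] (Bt : TwoSidedIdeal R)
    (p : Submodule R R) :
    ∀ l : List R, (∀ x ∈ l, ∀ w ∈ Bt, w * x ∈ p) →
    devI p (p ⊔ Submodule.span R {x : R | x ∈ l}) ≤
      devI (leftIdealOf Bt) (⊤ : Submodule R R) := by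
  intro l
  induction l with
  | nil =>
    intro _
    have hset : {x : R | x ∈ ([] : List R)} = (∅ : Set R) := by ext z; simp
    rw [hset, Submodule.span_empty, sup_bot_eq, devI_self_zero]
    exact zero_le
  | cons a t IH =>
    intro hl
    have hset : {x : R | x ∈ a :: t} = insert a {x : R | x ∈ t} := by ext z; simp
    have hsup : p ⊔ Submodule.span R {x : R | x ∈ a :: t} =
        (p ⊔ Submodule.span R {x : R | x ∈ t}) ⊔ Submodule.span R {a} := by
      rw [hset, Submodule.span_insert, sup_comm (Submodule.span R {a}) _, ← sup_assoc]
    rw [hsup]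
    refine le_trans (devI_le_max le_sup_left le_sup_left) (max_le (IH ?_) ?_)
    · exact fun x hx w hw => hl x (List.mem_cons_of_mem a hx) w hw
    · exact cyclic_left Bt _ a (fun w hw =>
        (le_sup_left : p ≤ p ⊔ Submodule.span R {x : R | x ∈ t})
          (hl a List.mem_cons_self w hw))

theorem exist_prime_left [IsNoetherianRing R] (J : TwoSidedIdeal R)
    (hne : lKdim R ≠ 0) (hJ : lKdimQ J = lKdim R) :
    ∃ P : TwoSidedIdeal R, IsPrimeT P ∧ J ≤ P ∧ lKdimQ P = lKdim R := by
  have wfT : WellFoundedGT (TwoSidedIdeal R) :=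
    wellFoundedGT_of_map (fun I => leftIdealOf I)
      (fun _ _ h => leftIdealOf_mono h)
      (fun x y _ h => TwoSidedIdeal.le_iff.2 (fun z hz => h (hz : z ∈ (y : Set R))))
      inferInstance
  obtain ⟨P, ⟨hJP, hPd⟩, hmax⟩ := wfT.wf.has_min
    {I : TwoSidedIdeal R | J ≤ I ∧ lKdimQ I = lKdim R} ⟨J, le_rfl, hJ⟩
  refine ⟨P, ⟨?_, ?_⟩, hJP, hPd⟩
  · intro huniv
    have htop : leftIdealOf P = ⊤ := by
      ext z
      exact ⟨fun _ => trivial, fun _ => (show z ∈ (P : Set R) from huniv ▸ Set.mem_univ z)⟩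
    have h0 : lKdimQ P = 0 := by
      rw [lKdimQ_eq_devI, htop]
      exact devI_self_zero (⊤ : Submodule R R)
    exact hne (hPd ▸ h0)
  · intro x y hxy
    by_contra hcon
    push_neg at hcon
    obtain ⟨hx, hy⟩ := hcon
    set B : TwoSidedIdeal R := TwoSidedIdeal.mk' {z : R | ∀ r : R, z * r * y ∈ P}
      (fun r => by rw [zero_mul, zero_mul]; exact P.zero_mem)
      (fun {z w} hz hw r => by rw [add_mul, add_mul]; exact P.add_mem (hz r) (hw r))
      (fun {z} hz r => by rw [neg_mul, neg_mul]; exact P.neg_mem (hz r))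
      (fun {u z} hz r => by
        rw [show u * z * r * y = u * (z * r * y) by noncomm_ring]
        exact P.mul_mem_left _ _ (hz r))
      (fun {z u} hz r => by
        rw [show z * u * r * y = z * (u * r) * y by noncomm_ring]
        exact hz (u * r)) with hBdef
    have memB : ∀ z : R, z ∈ B ↔ ∀ r : R, z * r * y ∈ P := fun z =>
      TwoSidedIdeal.mem_mk' _ _ _ _ _ _ z
    have hPB : P ≤ B := TwoSidedIdeal.le_iff.2 (fun p hp => (memB p).2
      (fun r => P.mul_mem_right _ _ (P.mul_mem_right _ _ hp)))
    have hxB : x ∈ B := (memB x).2 hxy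
    have hPltB : P < B := lt_of_le_of_ne hPB (fun hEq => hx (hEq ▸ hxB))
    have hBd : lKdimQ B < lKdim R := by
      refine lt_of_le_of_ne (lKdimQ_le B) (fun hEq => ?_)
      exact hmax B ⟨hJP.trans hPB, hEq⟩ hPltB
    set A : TwoSidedIdeal R := TwoSidedIdeal.mk' {z : R | ∀ w ∈ B, w * z ∈ P}
      (fun w _ => by rw [mul_zero]; exact P.zero_mem)
      (fun {z z'} hz hz' w hw => by rw [mul_add]; exact P.add_mem (hz w hw) (hz' w hw))
      (fun {z} hz w hw => by rw [mul_neg]; exact P.neg_mem (hz w hw))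
      (fun {u z} hz w hw => by
        rw [← mul_assoc]
        exact hz _ (B.mul_mem_right _ _ hw))
      (fun {z u} hz w hw => by
        rw [← mul_assoc]
        exact P.mul_mem_right _ _ (hz w hw)) with hAdef
    have memA : ∀ z : R, z ∈ A ↔ ∀ w ∈ B, w * z ∈ P := fun z =>
      TwoSidedIdeal.mem_mk' _ _ _ _ _ _ z
    have hPA : P ≤ A := TwoSidedIdeal.le_iff.2 (fun p hp => (memA p).2
      (fun w _ => P.mul_mem_left _ _ hp))
    have hyA : y ∈ A := (memA y).2 (fun w hw => by
      have := (memB w).1 hw 1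
      rwa [mul_one] at this)
    have hPltA : P < A := lt_of_le_of_ne hPA (fun hEq => hy (hEq ▸ hyA))
    have hAd : lKdimQ A < lKdim R := by
      refine lt_of_le_of_ne (lKdimQ_le A) (fun hEq => ?_)
      exact hmax A ⟨hJP.trans hPA, hEq⟩ hPltA
    obtain ⟨s, hs⟩ := (IsNoetherian.noetherian (leftIdealOf A) : (leftIdealOf A).FG)
    have hlist : {z : R | z ∈ s.toList} = (↑s : Set R) := by ext z; simp
    have hAr : leftIdealOf P ⊔ Submodule.span R {z : R | z ∈ s.toList} = leftIdealOf A := by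
      rw [hlist, hs]
      exact sup_eq_right.2 (leftIdealOf_mono hPA)
    have hPA2 : devI (leftIdealOf P) (leftIdealOf A) ≤
        devI (leftIdealOf B) (⊤ : Submodule R R) := by
      rw [← hAr]
      refine gen_bound_left B (leftIdealOf P) s.toList ?_
      intro z hz w hw
      have hzs : z ∈ (↑s : Set R) := by simpa using hz
      have hzA : z ∈ A := (show z ∈ leftIdealOf A from hs ▸ Submodule.subset_span hzs)
      exact (memA z).1 hzA w hw
    have hsplit : lKdim R ≤ max (devI (leftIdealOf P) (leftIdealOf A))
        (devI (leftIdealOf A) (⊤ : Submodule R R)) := by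
      rw [← hPd, lKdimQ_eq_devI]
      exact devI_le_max (leftIdealOf_mono hPA) le_top
    have h1 : devI (leftIdealOf P) (leftIdealOf A) < lKdim R :=
      lt_of_le_of_lt (hPA2.trans_eq (lKdimQ_eq_devI B).symm) hBd
    have h2 : devI (leftIdealOf A) (⊤ : Submodule R R) < lKdim R :=
      (lKdimQ_eq_devI A ▸ hAd)
    exact absurd hsplit (not_le.2 (max_lt h1 h2))

end RingLeft


section Corner
variable {S : Type u} [Ring S]

/-- right multiplication as a left-module endomorphism -/
def rmulMap (a : S) : S →ₗ[S] S where
  toFun x := x * a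
  map_add' x y := add_mul x y a
  map_smul' r x := mul_assoc r x a

/-- left multiplication as a right-module endomorphism -/
def lmulMap (a : S) : S →ₗ[Sᵐᵒᵖ] S where
  toFun x := a * x
  map_add' x y := mul_add a x y
  map_smul' r x := (mul_assoc a x r.unop).symm

theorem map_simple {R₀ M : Type*} [Ring R₀] [AddCommGroup M] [Module R₀ M]
    (f : M →ₗ[R₀] M) {V : Submodule R₀ M}
    (hV : ∀ W ≤ V, W = ⊥ ∨ W = V) :
    ∀ W ≤ Submodule.map f V, W = ⊥ ∨ W = Submodule.map f V := by
  intro W hW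
  rcases hV (V ⊓ Submodule.comap f W) inf_le_left with hK | hK
  · left
    rw [eq_bot_iff]
    intro w hw
    obtain ⟨v, hv, rfl⟩ := hW hw
    have hmem : v ∈ V ⊓ Submodule.comap f W := ⟨hv, hw⟩
    rw [hK, Submodule.mem_bot] at hmem
    rw [Submodule.mem_bot, hmem, map_zero]
  · right
    refine le_antisymm hW (Submodule.map_le_iff_le_comap.2 ?_)
    conv_lhs => rw [← hK]
    exact inf_le_right

theorem dev_zero_of_semisimple {R₀ M : Type u} [Ring R₀] [AddCommGroup M] [Module R₀ M]
    [WellFoundedGT (Submodule R₀ M)]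
    (fs : Finset (Submodule R₀ M))
    (hfs : ∀ V ∈ fs, ∀ W ≤ V, W = ⊥ ∨ W = V)
    (htop : fs.sup id = ⊤) : dev (Submodule R₀ M) = 0 := by
  classical
  have main : ∀ gs : Finset (Submodule R₀ M), (∀ V ∈ gs, ∀ W ≤ V, W = ⊥ ∨ W = V) →
      devI (⊥ : Submodule R₀ M) (gs.sup id) = 0 := by
    intro gs
    induction gs using Finset.cons_induction with
    | empty => intro _; rw [Finset.sup_empty]; exact devI_self_zero _
    | cons a s ha IH =>
      intro hgs
      rw [Finset.sup_cons, sup_comm]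
      have IH' := IH (fun V hV => hgs V (Finset.mem_cons_of_mem hV))
      refine le_antisymm ?_ zero_le
      refine le_trans (devI_le_max bot_le le_sup_left) ?_
      rw [IH']
      refine max_le le_rfl ?_
      refine dev_le (DevLE.of_map _ (fun K =>
          (⟨K.1 ⊓ (id a), bot_le, inf_le_right⟩ :
            {x : Submodule R₀ M // ⊥ ≤ x ∧ x ≤ id a}))
        (fun x y h => Subtype.mk_le_mk.2 (inf_le_inf_right _ (Subtype.coe_le_coe.2 h)))
        ?_ (devle_simple (hgs a (Finset.mem_cons_self a s))))
      intro x y hxy h2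
      have h2' : y.1 ⊓ id a ≤ x.1 ⊓ id a := Subtype.mk_le_mk.1 h2
      have hay : id a ⊓ y.1 ≤ x.1 := by
        rw [inf_comm]
        exact h2'.trans inf_le_left
      refine Subtype.coe_le_coe.1 ?_
      calc (y.1 : Submodule R₀ M) = (s.sup id ⊔ id a) ⊓ y.1 := (inf_eq_right.2 y.2.2).symm
      _ = s.sup id ⊔ (id a ⊓ y.1) := sup_inf_assoc_of_le (id a) y.2.1
      _ ≤ x.1 := sup_le x.2.1 hay
  rw [show dev (Submodule R₀ M) = devI (⊥ : Submodule R₀ M) ⊤ from dev_eq_devI_bot_top _,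
    ← htop]
  exact main fs hfs

theorem simple_corner_rl (S : Type u) [Ring S] [Nontrivial S]
    (hprime : ∀ x y : S, (∀ t : S, x * t * y = 0) → x = 0 ∨ y = 0)
    (hsimple : ∀ T : TwoSidedIdeal S, (∃ x ∈ T, x ≠ 0) → (T : Set S) = Set.univ)
    (hwfl : WellFoundedGT (Submodule S S))
    (hwfr : WellFoundedGT (Submodule Sᵐᵒᵖ S))
    (hr0 : dev (Submodule Sᵐᵒᵖ S) = 0) : dev (Submodule S S) = 0 := by
  classical
  have hdcc : WellFoundedLT (Submodule Sᵐᵒᵖ S) :=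
    wellFoundedLT_of_devle (by rw [← hr0]; exact devle_dev (by haveI := hwfr; exact exists_devle))
  have htopbot : (⊤ : Submodule Sᵐᵒᵖ S) ≠ ⊥ := fun hEq => one_ne_zero
    ((Submodule.mem_bot Sᵐᵒᵖ).1 (hEq ▸ Submodule.mem_top))
  obtain ⟨U, hUne, hUmin'⟩ := hdcc.wf.has_min {K : Submodule Sᵐᵒᵖ S | K ≠ ⊥} ⟨⊤, htopbot⟩
  have hUmin : ∀ K : Submodule Sᵐᵒᵖ S, K ≤ U → K ≠ ⊥ → K = U := fun K hK hKne =>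
    (hK.lt_or_eq).resolve_left (hUmin' K hKne)
  obtain ⟨u, huU, hune⟩ := (Submodule.ne_bot_iff U).1 hUne
  have hprod : ∃ t : S, u * t * u ≠ 0 := by
    by_contra hall
    push_neg at hall
    exact hune ((hprime u u hall).elim id id)
  obtain ⟨t₀, ht₀⟩ := hprod
  have haU : u * t₀ ∈ U := U.smul_mem (MulOpposite.op t₀) huU
  set a := u * t₀ with ha_def
  have haw : a * u ≠ 0 := ht₀
  have hane : a ≠ 0 := fun h => haw (by rw [h, zero_mul])
  set aU := Submodule.map (lmulMap a) U with haU_def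
  have haUle : aU ≤ U := by
    rintro _ ⟨w, hw, rfl⟩
    show a * w ∈ U
    exact U.smul_mem (MulOpposite.op w) haU
  have haUeq : aU = U := hUmin aU haUle (fun hEq => haw (by
    have hmem : a * u ∈ aU := ⟨u, huU, rfl⟩
    rw [hEq] at hmem
    exact (Submodule.mem_bot _).1 hmem))
  obtain ⟨e, heU, hae⟩ : ∃ e ∈ U, a * e = a := by
    have : a ∈ aU := haUeq.symm ▸ haU
    obtain ⟨e, he, hfe⟩ := this
    exact ⟨e, he, hfe⟩
  have hZ : U ⊓ LinearMap.ker (lmulMap a) = ⊥ := by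
    by_contra hne
    have heq := hUmin _ inf_le_left hne
    have huZ : u ∈ U ⊓ LinearMap.ker (lmulMap a) := heq.symm ▸ huU
    exact haw (LinearMap.mem_ker.1 huZ.2)
  have hee : e * e = e := by
    have hx : e * e - e ∈ U ⊓ LinearMap.ker (lmulMap a) := by
      refine Submodule.mem_inf.2 ⟨U.sub_mem (U.smul_mem (MulOpposite.op e) heU) heU, ?_⟩
      refine LinearMap.mem_ker.2 ?_
      show a * (e * e - e) = 0
      rw [mul_sub, ← mul_assoc, hae, hae, sub_self]
    rw [hZ] at hx
    exact sub_eq_zero.1 ((Submodule.mem_bot _).1 hx)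
  have hene : e ≠ 0 := fun h => hane (by rw [← hae, h, mul_zero])
  have hrinv : ∀ x : S, x ≠ 0 → (∃ t, x = e * t * e) →
      ∃ y, (∃ t', y = e * t' * e) ∧ x * y = e := by
    rintro x hx ⟨t, hxt⟩
    have hxe : x * e = x := by rw [hxt, mul_assoc (e*t) e e, hee]
    have hxU : x ∈ U := by
      rw [hxt, mul_assoc]
      exact U.smul_mem (MulOpposite.op (t * e)) heU
    have hxS : Submodule.span Sᵐᵒᵖ {x} = U := hUmin _
      (Submodule.span_le.2 (Set.singleton_subset_iff.2 hxU))
      (fun hEq => hx ((Submodule.mem_bot _).1 (hEq ▸ Submodule.mem_span_singleton_self x)))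
    have heX : e ∈ Submodule.span Sᵐᵒᵖ {x} := hxS.symm ▸ heU
    obtain ⟨s, hs⟩ := Submodule.mem_span_singleton.1 heX
    have hxs : x * s.unop = e := hs
    refine ⟨e * s.unop * e, ⟨s.unop, rfl⟩, ?_⟩
    calc x * (e * s.unop * e) = ((x * e) * s.unop) * e := by rw [← mul_assoc, ← mul_assoc]
    _ = (x * s.unop) * e := by rw [hxe]
    _ = e := by rw [hxs, hee]
  have hdiv : ∀ x : S, x ≠ 0 → (∃ t, x = e * t * e) → ∃ y, x * y = e ∧ y * x = e := by
    intro x hx hxt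
    obtain ⟨y, hyt, hxy⟩ := hrinv x hx hxt
    have hye : y ≠ 0 := fun h => hene (by rw [← hxy, h, mul_zero])
    obtain ⟨w, hwt, hyw⟩ := hrinv y hye hyt
    have hxe : x * e = x := by
      obtain ⟨t, hxt'⟩ := hxt
      rw [hxt', mul_assoc (e*t) e e, hee]
    have hwe2 : e * w = w := by
      obtain ⟨t', h'⟩ := hwt
      rw [h', ← mul_assoc, ← mul_assoc, hee]
    have hxw : x = w := by
      calc x = x * e := hxe.symm
      _ = x * (y * w) := by rw [hyw]
      _ = (x * y) * w := by rw [mul_assoc]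
      _ = e * w := by rw [hxy]
      _ = w := hwe2
    exact ⟨y, hxy, by rw [hxw]; exact hyw⟩
  set V := Submodule.span S {e} with hV_def
  have heV : e ∈ V := Submodule.mem_span_singleton_self e
  have hVne : V ≠ ⊥ := fun hEq => hene ((Submodule.mem_bot _).1 (hEq ▸ heV))
  have hVmin : ∀ W ≤ V, W = ⊥ ∨ W = V := by
    intro W hWV
    by_cases hWb : W = ⊥
    · exact Or.inl hWb
    right
    obtain ⟨z, hzW, hzne⟩ := (Submodule.ne_bot_iff W).1 hWb
    obtain ⟨s, hs⟩ := Submodule.mem_span_singleton.1 (hWV hzW)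
    have hze : z = s * e := hs.symm
    have hexz : ∃ t, e * t * z ≠ 0 := by
      by_contra hall
      push_neg at hall
      rcases hprime e z hall with h | h
      · exact hene h
      · exact hzne h
    obtain ⟨t, htz⟩ := hexz
    have hform : ∃ t₂, e * t * z = e * t₂ * e := by
      refine ⟨t * s, ?_⟩
      rw [hze, ← mul_assoc, mul_assoc e t s]
    obtain ⟨t₂, ht₂⟩ := hform
    obtain ⟨y, hy1, hy2⟩ := hdiv (e * t * z) htz ⟨t₂, ht₂⟩
    have heW : e ∈ W := by
      have hsm : (y * (e * t)) • z ∈ W := W.smul_mem _ hzW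
      have heq : (y * (e * t)) * z = e := by rw [mul_assoc]; exact hy2
      rw [show ((y * (e * t)) • z : S) = (y * (e * t)) * z from rfl, heq] at hsm
      exact hsm
    exact le_antisymm hWV (Submodule.span_le.2 (Set.singleton_subset_iff.2 heW))
  set 𝒮 : Set (Submodule S S) := {V' | V' ≠ ⊥ ∧ ∀ W ≤ V', W = ⊥ ∨ W = V'} with hS_def
  set Soc := sSup 𝒮 with hSoc_def
  have hV𝒮 : V ∈ 𝒮 := ⟨hVne, hVmin⟩
  have hSocStable : ∀ y : S, Submodule.map (rmulMap y) Soc ≤ Soc := by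
    intro y
    have hrw : Submodule.map (rmulMap y) (sSup 𝒮) =
        ⨆ V' : 𝒮, Submodule.map (rmulMap y) V'.1 := by
      rw [sSup_eq_iSup', Submodule.map_iSup]
    rw [hSoc_def, hrw]
    refine iSup_le fun V' => ?_
    by_cases hb : Submodule.map (rmulMap y) V'.1 = ⊥
    · rw [hb]; exact bot_le
    · exact le_sSup (show _ ∈ 𝒮 from ⟨hb, map_simple (rmulMap y) V'.2.2⟩)
  set T : TwoSidedIdeal S := TwoSidedIdeal.mk' Soc Soc.zero_mem
      (fun {x y} ha hb => Soc.add_mem ha hb)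
      (fun {x} ha => Soc.neg_mem ha)
      (fun {x y} hy => by
        have := Soc.smul_mem x hy
        rwa [smul_eq_mul] at this)
      (fun {x y} hx => hSocStable y ⟨x, hx, rfl⟩) with hT_def
  have hTuniv : (T : Set S) = Set.univ := hsimple T
    ⟨e, (TwoSidedIdeal.mem_mk' _ _ _ _ _ _ e).2 (le_sSup hV𝒮 heV), hene⟩
  have hSoctop : Soc = ⊤ := by
    rw [eq_top_iff]
    intro x _
    have hx : x ∈ (T : Set S) := hTuniv ▸ Set.mem_univ x
    rwa [TwoSidedIdeal.coe_mk'] at hx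
  have h1 : (1 : S) ∈ sSup 𝒮 := by rw [← hSoc_def, hSoctop]; trivial
  obtain ⟨fs, hfsS, hmem⟩ := Submodule.mem_sSup_iff_exists_finset.1 h1
  have hfssup : fs.sup id = ⊤ := by
    rw [eq_top_iff]
    intro x _
    have h1' : (1:S) ∈ fs.sup id := by rw [Finset.sup_eq_iSup]; exact hmem
    have hsm := (fs.sup id).smul_mem x h1'
    rwa [smul_eq_mul, mul_one] at hsm
  exact dev_zero_of_semisimple fs (fun V' hV' => (hfsS hV').2) hfssup

end Corner


theorem simple_corner_lr (S : Type u) [Ring S] [Nontrivial S]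
    (hprime : ∀ x y : S, (∀ t : S, x * t * y = 0) → x = 0 ∨ y = 0)
    (hsimple : ∀ T : TwoSidedIdeal S, (∃ x ∈ T, x ≠ 0) → (T : Set S) = Set.univ)
    (hwfl : WellFoundedGT (Submodule S S))
    (hwfr : WellFoundedGT (Submodule Sᵐᵒᵖ S))
    (hl0 : dev (Submodule S S) = 0) : dev (Submodule Sᵐᵒᵖ S) = 0 := by
  classical
  have hdcc : WellFoundedLT (Submodule S S) :=
    wellFoundedLT_of_devle (by rw [← hl0]; exact devle_dev (by haveI := hwfl; exact exists_devle))
  have htopbot : (⊤ : Submodule S S) ≠ ⊥ := fun hEq => one_ne_zero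
    ((Submodule.mem_bot S).1 (hEq ▸ Submodule.mem_top))
  obtain ⟨U, hUne, hUmin'⟩ := hdcc.wf.has_min {K : Submodule S S | K ≠ ⊥} ⟨⊤, htopbot⟩
  have hUmin : ∀ K : Submodule S S, K ≤ U → K ≠ ⊥ → K = U := fun K hK hKne =>
    (hK.lt_or_eq).resolve_left (hUmin' K hKne)
  obtain ⟨u, huU, hune⟩ := (Submodule.ne_bot_iff U).1 hUne
  have hprod : ∃ t : S, u * t * u ≠ 0 := by
    by_contra hall
    push_neg at hall
    exact hune ((hprime u u hall).elim id id)
  obtain ⟨t₀, ht₀⟩ := hprod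
  have haU : t₀ * u ∈ U := U.smul_mem t₀ huU
  set a := t₀ * u with ha_def
  have haw : u * a ≠ 0 := fun h => ht₀ (by rw [mul_assoc]; exact h)
  have hane : a ≠ 0 := fun h => haw (by rw [h, mul_zero])
  set Ua := Submodule.map (rmulMap a) U with hUa_def
  have hUale : Ua ≤ U := by
    rintro _ ⟨w, hw, rfl⟩
    show w * a ∈ U
    exact U.smul_mem w haU
  have hUaeq : Ua = U := hUmin Ua hUale (fun hEq => haw (by
    have hmem : u * a ∈ Ua := ⟨u, huU, rfl⟩
    rw [hEq] at hmem
    exact (Submodule.mem_bot _).1 hmem))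
  obtain ⟨e, heU, hae⟩ : ∃ e ∈ U, e * a = a := by
    have : a ∈ Ua := hUaeq.symm ▸ haU
    obtain ⟨e, he, hfe⟩ := this
    exact ⟨e, he, hfe⟩
  have hZ : U ⊓ LinearMap.ker (rmulMap a) = ⊥ := by
    by_contra hne
    have heq := hUmin _ inf_le_left hne
    have huZ : u ∈ U ⊓ LinearMap.ker (rmulMap a) := heq.symm ▸ huU
    exact haw (LinearMap.mem_ker.1 huZ.2)
  have hee : e * e = e := by
    have hx : e * e - e ∈ U ⊓ LinearMap.ker (rmulMap a) := by
      refine Submodule.mem_inf.2 ⟨U.sub_mem (U.smul_mem e heU) heU, ?_⟩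
      refine LinearMap.mem_ker.2 ?_
      show (e * e - e) * a = 0
      rw [sub_mul, mul_assoc, hae, hae, sub_self]
    rw [hZ] at hx
    exact sub_eq_zero.1 ((Submodule.mem_bot _).1 hx)
  have hene : e ≠ 0 := fun h => hane (by rw [← hae, h, zero_mul])
  have hrinv : ∀ x : S, x ≠ 0 → (∃ t, x = e * t * e) →
      ∃ y, (∃ t', y = e * t' * e) ∧ y * x = e := by
    rintro x hx ⟨t, hxt⟩
    have hex : e * x = x := by rw [hxt, ← mul_assoc, ← mul_assoc, hee]
    have hxU : x ∈ U := by
      rw [hxt]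
      exact U.smul_mem (e * t) heU
    have hxS : Submodule.span S {x} = U := hUmin _
      (Submodule.span_le.2 (Set.singleton_subset_iff.2 hxU))
      (fun hEq => hx ((Submodule.mem_bot _).1 (hEq ▸ Submodule.mem_span_singleton_self x)))
    have heX : e ∈ Submodule.span S {x} := hxS.symm ▸ heU
    obtain ⟨s, hs⟩ := Submodule.mem_span_singleton.1 heX
    have hxs : s * x = e := hs
    refine ⟨e * s * e, ⟨s, rfl⟩, ?_⟩
    calc (e * s * e) * x = (e * s) * (e * x) := by rw [mul_assoc (e*s) e x]
    _ = (e * s) * x := by rw [hex]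
    _ = e * (s * x) := by rw [mul_assoc]
    _ = e := by rw [hxs, hee]
  have hdiv : ∀ x : S, x ≠ 0 → (∃ t, x = e * t * e) → ∃ y, x * y = e ∧ y * x = e := by
    intro x hx hxt
    obtain ⟨y, hyt, hxy⟩ := hrinv x hx hxt
    have hye : y ≠ 0 := fun h => hene (by rw [← hxy, h, zero_mul])
    obtain ⟨w, hwt, hyw⟩ := hrinv y hye hyt
    have hex : e * x = x := by
      obtain ⟨t, hxt'⟩ := hxt
      rw [hxt', ← mul_assoc, ← mul_assoc, hee]
    have hwe2 : w * e = w := by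
      obtain ⟨t', h'⟩ := hwt
      rw [h', mul_assoc (e*t') e e, hee]
    have hxw : x = w := by
      calc x = e * x := hex.symm
      _ = (w * y) * x := by rw [hyw]
      _ = w * (y * x) := by rw [mul_assoc]
      _ = w * e := by rw [hxy]
      _ = w := hwe2
    exact ⟨y, by rw [hxw]; exact hyw, hxy⟩
  set V := Submodule.span Sᵐᵒᵖ {e} with hV_def
  have heV : e ∈ V := Submodule.mem_span_singleton_self e
  have hVne : V ≠ ⊥ := fun hEq => hene ((Submodule.mem_bot _).1 (hEq ▸ heV))
  have hVmin : ∀ W ≤ V, W = ⊥ ∨ W = V := by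
    intro W hWV
    by_cases hWb : W = ⊥
    · exact Or.inl hWb
    right
    obtain ⟨z, hzW, hzne⟩ := (Submodule.ne_bot_iff W).1 hWb
    obtain ⟨s, hs⟩ := Submodule.mem_span_singleton.1 (hWV hzW)
    have hze : z = e * s.unop := hs.symm
    have hexz : ∃ t, z * t * e ≠ 0 := by
      by_contra hall
      push_neg at hall
      rcases hprime z e hall with h | h
      · exact hzne h
      · exact hene h
    obtain ⟨t, htz⟩ := hexz
    have hform : ∃ t₂, z * t * e = e * t₂ * e := by
      refine ⟨s.unop * t, ?_⟩
      rw [hze, mul_assoc e s.unop t]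
    obtain ⟨t₂, ht₂⟩ := hform
    obtain ⟨y, hy1, hy2⟩ := hdiv (z * t * e) htz ⟨t₂, ht₂⟩
    have heW : e ∈ W := by
      have hsm : (MulOpposite.op (t * e * y)) • z ∈ W := W.smul_mem _ hzW
      have heq : z * (t * e * y) = e := by rw [← mul_assoc, ← mul_assoc]; exact hy1
      rw [show ((MulOpposite.op (t * e * y)) • z : S) = z * (t * e * y) from rfl, heq] at hsm
      exact hsm
    exact le_antisymm hWV (Submodule.span_le.2 (Set.singleton_subset_iff.2 heW))
  set 𝒮 : Set (Submodule Sᵐᵒᵖ S) := {V' | V' ≠ ⊥ ∧ ∀ W ≤ V', W = ⊥ ∨ W = V'} with hS_def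
  set Soc := sSup 𝒮 with hSoc_def
  have hV𝒮 : V ∈ 𝒮 := ⟨hVne, hVmin⟩
  have hSocStable : ∀ y : S, Submodule.map (lmulMap y) Soc ≤ Soc := by
    intro y
    have hrw : Submodule.map (lmulMap y) (sSup 𝒮) =
        ⨆ V' : 𝒮, Submodule.map (lmulMap y) V'.1 := by
      rw [sSup_eq_iSup', Submodule.map_iSup]
    rw [hSoc_def, hrw]
    refine iSup_le fun V' => ?_
    by_cases hb : Submodule.map (lmulMap y) V'.1 = ⊥
    · rw [hb]; exact bot_le
    · exact le_sSup (show _ ∈ 𝒮 from ⟨hb, map_simple (lmulMap y) V'.2.2⟩)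
  set T : TwoSidedIdeal S := TwoSidedIdeal.mk' Soc Soc.zero_mem
      (fun {x y} ha hb => Soc.add_mem ha hb)
      (fun {x} ha => Soc.neg_mem ha)
      (fun {x y} hy => hSocStable x ⟨y, hy, rfl⟩)
      (fun {x y} hx => by
        have := Soc.smul_mem (MulOpposite.op y) hx
        exact this) with hT_def
  have hTuniv : (T : Set S) = Set.univ := hsimple T
    ⟨e, (TwoSidedIdeal.mem_mk' _ _ _ _ _ _ e).2 (le_sSup hV𝒮 heV), hene⟩
  have hSoctop : Soc = ⊤ := by
    rw [eq_top_iff]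
    intro x _
    have hx : x ∈ (T : Set S) := hTuniv ▸ Set.mem_univ x
    rwa [TwoSidedIdeal.coe_mk'] at hx
  have h1 : (1 : S) ∈ sSup 𝒮 := by rw [← hSoc_def, hSoctop]; trivial
  obtain ⟨fs, hfsS, hmem⟩ := Submodule.mem_sSup_iff_exists_finset.1 h1
  have hfssup : fs.sup id = ⊤ := by
    rw [eq_top_iff]
    intro x _
    have h1' : (1:S) ∈ fs.sup id := by rw [Finset.sup_eq_iSup]; exact hmem
    have hsm := (fs.sup id).smul_mem (MulOpposite.op x) h1'
    rwa [MulOpposite.smul_eq_mul_unop, MulOpposite.unop_op, one_mul] at hsm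
  exact dev_zero_of_semisimple fs (fun V' hV' => (hfsS hV').2) hfssup


section CornerAssemble
variable {R : Type u} [Ring R]

theorem dev_subsingleton {α : Type u} [Preorder α] [Subsingleton α] : dev α = 0 :=
  le_antisymm (dev_le (DevLE.of_forall_le
    (fun x y => le_of_eq (Subsingleton.elim x y)) 0)) zero_le

theorem wfgt_tsi [IsNoetherianRing Rᵐᵒᵖ] : WellFoundedGT (TwoSidedIdeal R) := by
  haveI := wfgt_right (R := R)
  exact wellFoundedGT_of_map (fun I => rightIdealOf I)
    (fun _ _ h => rightIdealOf_mono h)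
    (fun x y _ h => TwoSidedIdeal.le_iff.2 (fun z hz => h (hz : z ∈ (y : Set R))))
    inferInstance

theorem exists_max_ideal [IsNoetherianRing Rᵐᵒᵖ] [Nontrivial R] :
    ∃ M : TwoSidedIdeal R, (M : Set R) ≠ Set.univ ∧ IsPrimeT M ∧
      (∀ I : TwoSidedIdeal R, M ≤ I → (I : Set R) ≠ Set.univ → I = M) := by
  have wfT : WellFoundedGT (TwoSidedIdeal R) := wfgt_tsi
  have hbot : ((⊥ : TwoSidedIdeal R) : Set R) ≠ Set.univ := fun hEq =>
    one_ne_zero ((TwoSidedIdeal.mem_bot R).1 (show (1:R) ∈ (⊥ : TwoSidedIdeal R) from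
      (show (1:R) ∈ ((⊥ : TwoSidedIdeal R) : Set R) by rw [hEq]; trivial)))
  obtain ⟨M, hMp, hMmax'⟩ := wfT.wf.has_min
    {I : TwoSidedIdeal R | (I : Set R) ≠ Set.univ} ⟨⊥, hbot⟩
  have hMmax : ∀ I : TwoSidedIdeal R, M ≤ I → (I : Set R) ≠ Set.univ → I = M :=
    fun I hMI hIp => ((hMI.lt_or_eq).resolve_left (hMmax' I hIp)).symm
  refine ⟨M, hMp, ⟨hMp, ?_⟩, hMmax⟩
  intro x y hxy
  by_contra hcon
  push_neg at hcon
  obtain ⟨hx, hy⟩ := hcon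
  set D : TwoSidedIdeal R := TwoSidedIdeal.mk' {z : R | ∀ r : R, x * r * z ∈ M}
    (fun r => by rw [mul_zero]; exact M.zero_mem)
    (fun {z w} hz hw r => by rw [mul_add]; exact M.add_mem (hz r) (hw r))
    (fun {z} hz r => by rw [mul_neg]; exact M.neg_mem (hz r))
    (fun {u z} hz r => by
      rw [show x * r * (u * z) = x * (r * u) * z by noncomm_ring]
      exact hz (r * u))
    (fun {z u} hz r => by rw [← mul_assoc]; exact M.mul_mem_right _ _ (hz r)) with hDdef
  have memD : ∀ z : R, z ∈ D ↔ ∀ r : R, x * r * z ∈ M := fun z =>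
    TwoSidedIdeal.mem_mk' _ _ _ _ _ _ z
  have hMD : M ≤ D := TwoSidedIdeal.le_iff.2 (fun p hp => (memD p).2
    (fun r => M.mul_mem_left _ _ hp))
  have hyD : y ∈ D := (memD y).2 hxy
  have hDuniv : (D : Set R) = Set.univ := by
    by_contra hDp
    exact hy ((hMmax D hMD hDp) ▸ hyD)
  have h1D : (1 : R) ∈ D := show (1:R) ∈ (D : Set R) by rw [hDuniv]; trivial
  have := (memD 1).1 h1D 1
  rw [mul_one, mul_one] at this
  exact hx this

theorem quot_nontrivial (M : TwoSidedIdeal R) (hMp : (M : Set R) ≠ Set.univ) :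
    Nontrivial M.ringCon.Quotient := by
  refine ⟨1, 0, fun hEq => hMp ?_⟩
  have h1 : (1:R) ∈ M := by
    rw [← coe_zero_iff M 1, M.ringCon.coe_one]
    exact hEq
  refine Set.eq_univ_of_forall fun x => ?_
  have hx := M.mul_mem_left x 1 h1
  rwa [mul_one] at hx

theorem quot_prime (M : TwoSidedIdeal R) (hM : IsPrimeT M) :
    ∀ x y : M.ringCon.Quotient, (∀ t, x * t * y = 0) → x = 0 ∨ y = 0 := by
  intro x y hxy
  obtain ⟨a, rfl⟩ := coe_surj M x
  obtain ⟨b, rfl⟩ := coe_surj M y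
  have hab : ∀ r : R, a * r * b ∈ M := fun r => by
    rw [← coe_zero_iff M, M.ringCon.coe_mul, M.ringCon.coe_mul]
    exact hxy (r : M.ringCon.Quotient)
  rcases hM.2 a b hab with h | h
  · exact Or.inl ((coe_zero_iff M a).2 h)
  · exact Or.inr ((coe_zero_iff M b).2 h)

theorem quot_simple (M : TwoSidedIdeal R)
    (hMmax : ∀ I : TwoSidedIdeal R, M ≤ I → (I : Set R) ≠ Set.univ → I = M) :
    ∀ T : TwoSidedIdeal M.ringCon.Quotient, (∃ x ∈ T, x ≠ 0) →
      (T : Set M.ringCon.Quotient) = Set.univ := by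
  rintro T ⟨x, hxT, hxne⟩
  set T' : TwoSidedIdeal R := TwoSidedIdeal.mk'
      {z : R | (z : M.ringCon.Quotient) ∈ T}
    (by show ((0:R) : M.ringCon.Quotient) ∈ T
        rw [M.ringCon.coe_zero]; exact T.zero_mem)
    (fun {a b} ha hb => by
      show ((a+b:R) : M.ringCon.Quotient) ∈ T
      rw [M.ringCon.coe_add]; exact T.add_mem ha hb)
    (fun {a} ha => by
      show ((-a:R) : M.ringCon.Quotient) ∈ T
      rw [M.ringCon.coe_neg]; exact T.neg_mem ha)
    (fun {a b} hb => by
      show ((a*b:R) : M.ringCon.Quotient) ∈ T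
      rw [M.ringCon.coe_mul]; exact T.mul_mem_left _ _ hb)
    (fun {a b} ha => by
      show ((a*b:R) : M.ringCon.Quotient) ∈ T
      rw [M.ringCon.coe_mul]; exact T.mul_mem_right _ _ ha) with hT'def
  have memT' : ∀ z : R, z ∈ T' ↔ (z : M.ringCon.Quotient) ∈ T := fun z =>
    TwoSidedIdeal.mem_mk' _ _ _ _ _ _ z
  have hMT' : M ≤ T' := TwoSidedIdeal.le_iff.2 fun m hm => (memT' m).2 (by
    rw [(coe_zero_iff M m).2 hm]
    exact T.zero_mem)
  by_cases hT'univ : (T' : Set R) = Set.univ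
  · refine Set.eq_univ_of_forall fun q => ?_
    obtain ⟨z, rfl⟩ := coe_surj M q
    have hz : z ∈ T' := show z ∈ (T' : Set R) by rw [hT'univ]; trivial
    exact (memT' z).1 hz
  · exfalso
    have hEq := hMmax T' hMT' hT'univ
    obtain ⟨z, rfl⟩ := coe_surj M x
    have hz : z ∈ T' := (memT' z).2 hxT
    rw [hEq] at hz
    exact hxne ((coe_zero_iff M z).2 hz)

theorem wfgt_quotL [IsNoetherianRing R] (M : TwoSidedIdeal R) :
    WellFoundedGT (Submodule M.ringCon.Quotient M.ringCon.Quotient) :=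
  wellFoundedGT_of_map (fun S => qcomapL M S) (fun S S' h x hx => h hx)
    (fun S S' _ h q hq => by
      obtain ⟨x, rfl⟩ := coe_surj M q
      exact h hq)
    inferInstance

theorem wfgt_quotR [IsNoetherianRing Rᵐᵒᵖ] (M : TwoSidedIdeal R) :
    WellFoundedGT (Submodule (M.ringCon.Quotient)ᵐᵒᵖ M.ringCon.Quotient) := by
  haveI := wfgt_right (R := R)
  exact wellFoundedGT_of_map (fun S => qcomapR M S) (fun S S' h x hx => h hx)
    (fun S S' _ h q hq => by
      obtain ⟨x, rfl⟩ := coe_surj M q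
      exact h hq)
    inferInstance

theorem corner_rl [IsNoetherianRing R] [IsNoetherianRing Rᵐᵒᵖ]
    (h : Lam R = Lam' R) (h0 : rKdim R = 0) : lKdim R = 0 := by
  rcases subsingleton_or_nontrivial R with hsub | hnt
  · haveI : Subsingleton (Submodule R R) :=
      ⟨fun K L => by ext x; rw [Subsingleton.elim x (0:R)];
                     exact iff_of_true K.zero_mem L.zero_mem⟩
    exact dev_subsingleton
  obtain ⟨M, hMp, hMprime, hMmax⟩ := exists_max_ideal (R := R)
  have hMr : rKdimQ M = rKdim R := by
    rw [h0]
    exact le_antisymm (h0 ▸ rKdimQ_le M) zero_le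
  have hMLam' : M ∈ Lam' R := h ▸ (⟨hMprime, hMr⟩ : M ∈ Lam R)
  haveI := quot_nontrivial M hMp
  have hr0 : dev (Submodule (M.ringCon.Quotient)ᵐᵒᵖ M.ringCon.Quotient) = 0 := by
    show rKdimQ M = 0
    rw [hMr, h0]
  have hql0 : dev (Submodule M.ringCon.Quotient M.ringCon.Quotient) = 0 :=
    simple_corner_rl M.ringCon.Quotient (quot_prime M hMprime)
      (quot_simple M hMmax) (wfgt_quotL M) (wfgt_quotR M) hr0
  rw [← hMLam'.2]
  exact hql0

theorem corner_lr [IsNoetherianRing R] [IsNoetherianRing Rᵐᵒᵖ]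
    (h : Lam R = Lam' R) (h0 : lKdim R = 0) : rKdim R = 0 := by
  rcases subsingleton_or_nontrivial R with hsub | hnt
  · haveI : Subsingleton (Submodule Rᵐᵒᵖ R) :=
      ⟨fun K L => by ext x; rw [Subsingleton.elim x (0:R)];
                     exact iff_of_true K.zero_mem L.zero_mem⟩
    exact dev_subsingleton
  obtain ⟨M, hMp, hMprime, hMmax⟩ := exists_max_ideal (R := R)
  have hMl : lKdimQ M = lKdim R := by
    rw [h0]
    exact le_antisymm (h0 ▸ lKdimQ_le M) zero_le
  have hMLam : M ∈ Lam R := h.symm ▸ (⟨hMprime, hMl⟩ : M ∈ Lam' R)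
  haveI := quot_nontrivial M hMp
  have hl0 : dev (Submodule M.ringCon.Quotient M.ringCon.Quotient) = 0 := by
    show lKdimQ M = 0
    rw [hMl, h0]
  have hqr0 : dev (Submodule (M.ringCon.Quotient)ᵐᵒᵖ M.ringCon.Quotient) = 0 :=
    simple_corner_lr M.ringCon.Quotient (quot_prime M hMprime)
      (quot_simple M hMmax) (wfgt_quotL M) (wfgt_quotR M) hl0
  rw [← hMLam.2]
  exact hqr0

end CornerAssemble

theorem stmt8' (R : Type u) [Ring R] [IsNoetherianRing R] [IsNoetherianRing Rᵐᵒᵖ]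
    (h : Lam R = Lam' R) (J : TwoSidedIdeal R) :
    rKdimQ J < rKdim R ↔ lKdimQ J < lKdim R := by
  constructor
  · intro hlt
    rcases eq_or_ne (lKdim R) 0 with h0 | hne0
    · exfalso
      have hr0 : rKdim R = 0 := corner_lr h h0
      rw [hr0] at hlt
      exact absurd hlt (not_lt_of_ge zero_le)
    · refine lt_of_le_of_ne (lKdimQ_le J) (fun hEq => ?_)
      obtain ⟨P, hP, hJP, hPd⟩ := exist_prime_left J hne0 hEq
      have hPL : P ∈ Lam R := h.symm ▸ (⟨hP, hPd⟩ : P ∈ Lam' R)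
      have hle : rKdimQ P ≤ rKdimQ J := rKdimQ_mono hJP
      rw [hPL.2] at hle
      exact absurd (lt_of_lt_of_le hlt hle) (lt_irrefl _)
  · intro hlt
    rcases eq_or_ne (rKdim R) 0 with h0 | hne0
    · exfalso
      have hl0 : lKdim R = 0 := corner_rl h h0
      rw [hl0] at hlt
      exact absurd hlt (not_lt_of_ge zero_le)
    · refine lt_of_le_of_ne (rKdimQ_le J) (fun hEq => ?_)
      obtain ⟨P, hP, hJP, hPd⟩ := exist_prime_right J hne0 hEq
      have hPL : P ∈ Lam' R := h ▸ (⟨hP, hPd⟩ : P ∈ Lam R)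
      have hle : lKdimQ P ≤ lKdimQ J := lKdimQ_mono hJP
      rw [hPL.2] at hle
      exact absurd (lt_of_lt_of_le hlt hle) (lt_irrefl _)


/-- If `Λ(R) = Λ'(R)` then for every two-sided ideal `J`,
`|R/J|_r < |R|_r ↔ |R/J|_l < |R|_l`. -/
theorem stmt8 (R : Type u) [Ring R] [IsNoetherianRing R] [IsNoetherianRing Rᵐᵒᵖ]
    (h : Lam R = Lam' R) (J : TwoSidedIdeal R) :
    rKdimQ J < rKdim R ↔ lKdimQ J < lKdim R := stmt8' R h J
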